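/- The comultiplication Δ on A = R[X]/((X - x₁)(X - x₂)) is coassociative: (id ⊗ Δ) ∘ Δ = (Δ ⊗ id) ∘ Δ. -/

import Mathlib

open Polynomial TensorProduct

set_option maxHeartbeats 1600000 in
set_option synthInstance.maxHeartbeats 400000 in
/-- The comultiplication on `A = R[X]/((X - x₁)(X - x₂))` is coassociative. -/
theorem stmt9 (R : Type*) [CommRing R] (x₁ x₂ : R)
    (Δ : (Polynomial R ⧸ Ideal.span {(X - C x₁) * (X - C x₂)}) →ₗ[R]
      ((Polynomial R ⧸ Ideal.span {(X - C x₁) * (X - C x₂)}) ⊗[R]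
        (Polynomial R ⧸ Ideal.span {(X - C x₁) * (X - C x₂)})))
    (hΔ1 : Δ 1 =
      (Ideal.Quotient.mk (Ideal.span {(X - C x₁) * (X - C x₂)}) X) ⊗ₜ[R] 1 +
      1 ⊗ₜ[R] (Ideal.Quotient.mk (Ideal.span {(X - C x₁) * (X - C x₂)}) X) -
      (x₁ + x₂) • ((1 : Polynomial R ⧸ Ideal.span {(X - C x₁) * (X - C x₂)}) ⊗ₜ[R] 1))
    (hΔX : Δ (Ideal.Quotient.mk (Ideal.span {(X - C x₁) * (X - C x₂)}) X) =
      (Ideal.Quotient.mk (Ideal.span {(X - C x₁) * (X - C x₂)}) X) ⊗ₜ[R]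
        (Ideal.Quotient.mk (Ideal.span {(X - C x₁) * (X - C x₂)}) X) -
      (x₁ * x₂) • ((1 : Polynomial R ⧸ Ideal.span {(X - C x₁) * (X - C x₂)}) ⊗ₜ[R] 1)) :
    ∀ a : Polynomial R ⧸ Ideal.span {(X - C x₁) * (X - C x₂)},
      (TensorProduct.assoc R _ _ _) ((TensorProduct.map Δ LinearMap.id) (Δ a)) =
        (TensorProduct.map LinearMap.id Δ) (Δ a) := by
  intro a
  rcases subsingleton_or_nontrivial R with hR | hR
  · haveI := Module.subsingleton R
      (((Polynomial R ⧸ Ideal.span {(X - C x₁) * (X - C x₂)}) ⊗[R]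
        (Polynomial R ⧸ Ideal.span {(X - C x₁) * (X - C x₂)})) ⊗[R]
        (Polynomial R ⧸ Ideal.span {(X - C x₁) * (X - C x₂)}))
    haveI := Module.subsingleton R
      ((Polynomial R ⧸ Ideal.span {(X - C x₁) * (X - C x₂)}) ⊗[R]
        ((Polynomial R ⧸ Ideal.span {(X - C x₁) * (X - C x₂)}) ⊗[R]
        (Polynomial R ⧸ Ideal.span {(X - C x₁) * (X - C x₂)})))
    exact Subsingleton.elim _ _
  have hM : ((X - C x₁) * (X - C x₂)).Monic := (monic_X_sub_C x₁).mul (monic_X_sub_C x₂)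
  have hdeg : ((X - C x₁) * (X - C x₂)).natDegree = 2 := by
    rw [(monic_X_sub_C x₁).natDegree_mul (monic_X_sub_C x₂), natDegree_X_sub_C,
      natDegree_X_sub_C]
  let pb := AdjoinRoot.powerBasis' hM
  have key : (TensorProduct.assoc R (Polynomial R ⧸ Ideal.span {(X - C x₁) * (X - C x₂)})
        (Polynomial R ⧸ Ideal.span {(X - C x₁) * (X - C x₂)})
        (Polynomial R ⧸ Ideal.span {(X - C x₁) * (X - C x₂)})).toLinearMap ∘ₗ
      (TensorProduct.map Δ LinearMap.id) ∘ₗ Δ = (TensorProduct.map LinearMap.id Δ) ∘ₗ Δ := by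
    apply pb.basis.ext
    rintro ⟨iv, hi⟩
    have hi' : iv < 2 := hdeg ▸ hi
    interval_cases iv
    · have hb : pb.basis ⟨0, hi⟩ =
          (1 : Polynomial R ⧸ Ideal.span {(X - C x₁) * (X - C x₂)}) := by
        rw [pb.basis_eq_pow, AdjoinRoot.powerBasis'_gen, pow_zero]; rfl
      rw [hb]
      show (TensorProduct.assoc R (Polynomial R ⧸ Ideal.span {(X - C x₁) * (X - C x₂)})
          (Polynomial R ⧸ Ideal.span {(X - C x₁) * (X - C x₂)})
          (Polynomial R ⧸ Ideal.span {(X - C x₁) * (X - C x₂)}))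
          ((TensorProduct.map Δ LinearMap.id)
            (Δ (1 : Polynomial R ⧸ Ideal.span {(X - C x₁) * (X - C x₂)}))) =
        (TensorProduct.map LinearMap.id Δ)
          (Δ (1 : Polynomial R ⧸ Ideal.span {(X - C x₁) * (X - C x₂)}))
      simp only [hΔ1, hΔX,
        map_sub, map_add, map_smul, TensorProduct.map_tmul, LinearMap.id_coe, id_eq,
        LinearEquiv.coe_coe, TensorProduct.assoc_tmul, tmul_add, tmul_sub, add_tmul,
        sub_tmul, ← smul_tmul', tmul_smul, smul_smul]
      module
    · have hb : pb.basis ⟨1, hi⟩ =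
          Ideal.Quotient.mk (Ideal.span {(X - C x₁) * (X - C x₂)}) X := by
        rw [pb.basis_eq_pow, AdjoinRoot.powerBasis'_gen, pow_one]; rfl
      rw [hb]
      show (TensorProduct.assoc R (Polynomial R ⧸ Ideal.span {(X - C x₁) * (X - C x₂)})
          (Polynomial R ⧸ Ideal.span {(X - C x₁) * (X - C x₂)})
          (Polynomial R ⧸ Ideal.span {(X - C x₁) * (X - C x₂)}))
          ((TensorProduct.map Δ LinearMap.id)
            (Δ (Ideal.Quotient.mk (Ideal.span {(X - C x₁) * (X - C x₂)}) X))) =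
        (TensorProduct.map LinearMap.id Δ)
          (Δ (Ideal.Quotient.mk (Ideal.span {(X - C x₁) * (X - C x₂)}) X))
      simp only [hΔ1, hΔX,
        map_sub, map_add, map_smul, TensorProduct.map_tmul, LinearMap.id_coe, id_eq,
        LinearEquiv.coe_coe, TensorProduct.assoc_tmul, tmul_add, tmul_sub, add_tmul,
        sub_tmul, ← smul_tmul', tmul_smul, smul_smul]
      module
  exact LinearMap.congr_fun key a
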